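/- arXiv:1205.2812 — 2 statements merged into one kernel-verified Lean document; each statement's English description precedes it below -/
import Mathlib

section
/- Let (X, 𝔄, μ) be a measure space with 0 < μ(X) < ∞, and let (φ_j) be a sequence of real-valued, square μ-integrable functions which is L^∞ quantum ergodic, i.e. for every bounded measurable g : X → ℝ one has ∫_X g φ_j² dμ → ∫_X g dμ as j → ∞. Then liminf_{j→∞} ∫_X |φ_j| dμ > 0; equivalently, there exist ε > 0 and J ∈ ℕ such that ∫_X |φ_j| dμ ≥ ε for all j ≥ J. -/
open MeasureTheory Filter Topology
open scoped ENNReal NNReal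

/-- **L^∞ quantum ergodicity implies a uniform lower bound on L¹ norms.**
Let (X, μ) be a measure space with 0 < μ(X) < ∞ and let (φ_j) be a sequence of
real-valued square-integrable functions which is L^∞ quantum ergodic, i.e.
∫ g φ_j² dμ → ∫ g dμ for every bounded measurable g. Then there exist ε > 0 and
J ∈ ℕ with ∫ |φ_j| dμ ≥ ε for all j ≥ J. -/
theorem liminf_L1_pos_of_Linfty_quantum_ergodic
    {X : Type*} [MeasurableSpace X] (μ : Measure X)
    (hpos : 0 < μ Set.univ) (hfin : μ Set.univ < ⊤)
    (φ : ℕ → X → ℝ)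
    (hL2 : ∀ j, MemLp (φ j) 2 μ)
    (hQE : ∀ g : X → ℝ, Measurable g → (∃ C : ℝ, ∀ x, |g x| ≤ C) →
      Tendsto (fun j => ∫ x, g x * (φ j x) ^ 2 ∂μ) atTop (𝓝 (∫ x, g x ∂μ))) :
    ∃ ε > (0 : ℝ), ∃ J : ℕ, ∀ j ≥ J, ε ≤ ∫ x, |φ j x| ∂μ := by
  classical
  by_contra hcon
  push_neg at hcon
  haveI : IsFiniteMeasure μ := ⟨hfin⟩
  set δ : ℝ := (μ Set.univ).toReal / 2 with hδ
  have hδpos : 0 < δ := by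
    have := ENNReal.toReal_pos hpos.ne' hfin.ne
    positivity
  -- select a subsequence with fast-decaying L¹ norms
  have hsel : ∀ k : ℕ, ∃ j ≥ k, ∫ x, |φ j x| ∂μ < δ * (1/2)^(k+1) := by
    intro k
    exact hcon (δ * (1/2)^(k+1)) (by positivity) k
  choose n hn hnlt using hsel
  -- measurable representatives
  set ψ : ℕ → X → ℝ := fun k => ((hL2 (n k)).1.mk (φ (n k))) with hψ
  have hψm : ∀ k, StronglyMeasurable (ψ k) := fun k => (hL2 (n k)).1.stronglyMeasurable_mk
  have hψae : ∀ k, φ (n k) =ᵐ[μ] ψ k := fun k => (hL2 (n k)).1.ae_eq_mk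
  have hψL2 : ∀ k, MemLp (ψ k) 2 μ := fun k => (hL2 (n k)).ae_eq (hψae k)
  -- integrability facts
  have hint1 : ∀ j, Integrable (φ j) μ := fun j =>
    ((hL2 j).mono_exponent (by norm_num)).integrable le_rfl
  have hintψ : ∀ k, Integrable (ψ k) μ := fun k => (hint1 (n k)).congr (hψae k)
  have hintψabs : ∀ k, Integrable (fun x => |ψ k x|) μ := fun k => (hintψ k).abs
  have hintψsq : ∀ k, Integrable (fun x => (ψ k x) ^ 2) μ := fun k => (hψL2 k).integrable_sq
  -- bad sets
  set B : ℕ → Set X := fun k => {x | (1:ℝ) ≤ |ψ k x|} with hB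
  have hBm : ∀ k, MeasurableSet (B k) :=
    fun k => measurableSet_le measurable_const ((hψm k).measurable.abs)
  set C : Set X := ⋃ k, B k with hC
  have hCm : MeasurableSet C := MeasurableSet.iUnion hBm
  -- Markov: μ (B k) ≤ ofReal (∫ |φ (n k)|)
  have hmarkov : ∀ k, μ (B k) ≤ ENNReal.ofReal (∫ x, |φ (n k) x| ∂μ) := by
    intro k
    have hset : B k = {x | (1:ℝ≥0∞) ≤ (fun x => (‖ψ k x‖₊ : ℝ≥0∞)) x} := by
      ext x
      simp [hB, ENNReal.one_le_coe_iff, ← NNReal.one_le_coe, coe_nnnorm, Real.norm_eq_abs]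
    have h2 := mul_meas_ge_le_lintegral₀ (μ := μ)
      ((hψm k).measurable.enorm.aemeasurable) (1 : ℝ≥0∞)
    rw [one_mul] at h2
    have h3 : ∫⁻ x, (‖ψ k x‖₊ : ℝ≥0∞) ∂μ = ∫⁻ x, (‖φ (n k) x‖₊ : ℝ≥0∞) ∂μ :=
      lintegral_congr_ae (Filter.EventuallyEq.symm
        (((hψae k).mono fun x hx => by simp [hx]) :
          (fun x => (‖φ (n k) x‖₊ : ℝ≥0∞)) =ᵐ[μ] fun x => (‖ψ k x‖₊ : ℝ≥0∞)))
    have h4 : ENNReal.ofReal (∫ x, ‖φ (n k) x‖ ∂μ) = ∫⁻ x, (‖φ (n k) x‖₊ : ℝ≥0∞) ∂μ :=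
      ofReal_integral_norm_eq_lintegral_enorm (hint1 (n k))
    have h5 : ∫ x, ‖φ (n k) x‖ ∂μ = ∫ x, |φ (n k) x| ∂μ := by
      simp [Real.norm_eq_abs]
    rw [hset]
    rw [← h5] at *
    calc μ {x | (1:ℝ≥0∞) ≤ (fun x => (‖ψ k x‖₊ : ℝ≥0∞)) x}
        ≤ ∫⁻ x, (‖ψ k x‖₊ : ℝ≥0∞) ∂μ := h2
      _ = ∫⁻ x, (‖φ (n k) x‖₊ : ℝ≥0∞) ∂μ := h3
      _ = ENNReal.ofReal (∫ x, ‖φ (n k) x‖ ∂μ) := h4.symm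
  -- μ C is small
  have hμC : μ C ≤ ENNReal.ofReal δ := by
    have hhalf : ENNReal.ofReal (1/2 : ℝ) = 2⁻¹ := by
      rw [ENNReal.ofReal_div_of_pos (by norm_num)]
      norm_num
    calc μ C ≤ ∑' k, μ (B k) := measure_iUnion_le B
      _ ≤ ∑' k, ENNReal.ofReal (δ * (1/2)^(k+1)) := by
          refine ENNReal.tsum_le_tsum fun k => ?_
          exact (hmarkov k).trans (ENNReal.ofReal_le_ofReal (hnlt k).le)
      _ = ∑' k, ENNReal.ofReal δ * (2⁻¹ : ℝ≥0∞)^(k+1) := by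
          refine tsum_congr fun k => ?_
          rw [ENNReal.ofReal_mul hδpos.le, ENNReal.ofReal_pow (by norm_num), hhalf]
      _ = ENNReal.ofReal δ * ∑' k, (2⁻¹ : ℝ≥0∞)^(k+1) := ENNReal.tsum_mul_left
      _ = ENNReal.ofReal δ := by
          have : ∑' k : ℕ, (2⁻¹ : ℝ≥0∞)^(k+1) = 2⁻¹ * ∑' k : ℕ, (2⁻¹ : ℝ≥0∞)^k := by
            rw [← ENNReal.tsum_mul_left]
            exact tsum_congr fun k => by ring
          rw [this, ENNReal.tsum_geometric, ENNReal.one_sub_inv_two,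
            ENNReal.mul_inv_cancel (by norm_num) (by norm_num), mul_one]
  have hofδ : ENNReal.ofReal δ = μ Set.univ / 2 := by
    rw [hδ, ENNReal.ofReal_div_of_pos (by norm_num), ENNReal.ofReal_toReal hfin.ne]
    norm_num
  -- the complement has positive measure
  have hCc : μ Set.univ / 2 ≤ μ Cᶜ := by
    have h1 : μ Cᶜ = μ Set.univ - μ C := measure_compl hCm (measure_ne_top μ C)
    have h2 : μ Set.univ - μ Set.univ / 2 ≤ μ Set.univ - μ C := by
      exact tsub_le_tsub_left (hμC.trans_eq hofδ) _
    rw [ENNReal.sub_half hfin.ne] at h2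
    rw [h1]; exact h2
  have hCcpos : 0 < (μ Cᶜ).toReal := by
    refine ENNReal.toReal_pos (fun h => ?_) (measure_ne_top μ Cᶜ)
    rw [h] at hCc
    have h0 : μ Set.univ / 2 = 0 := le_antisymm hCc zero_le'
    exact (ENNReal.div_pos hpos.ne' (by norm_num)).ne' h0
  -- the test function
  set g : X → ℝ := Set.indicator Cᶜ (fun _ => (1:ℝ)) with hg
  have hgm : Measurable g := measurable_const.indicator hCm.compl
  have hgb : ∃ Cb : ℝ, ∀ x, |g x| ≤ Cb := by
    refine ⟨1, fun x => ?_⟩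
    by_cases hx : x ∈ Cᶜ <;> simp [hg, hx]
  have hgnn : ∀ x, 0 ≤ g x := fun x => Set.indicator_nonneg (fun _ _ => zero_le_one) x
  have hlim := hQE g hgm hgb
  have hintg : ∫ x, g x ∂μ = (μ Cᶜ).toReal := by
    rw [hg, integral_indicator_const (1:ℝ) hCm.compl, smul_eq_mul, mul_one, measureReal_def]
  -- the subsequence limit
  have hnat : Tendsto n atTop atTop := tendsto_atTop_mono hn tendsto_id
  have hsub : Tendsto (fun k => ∫ x, g x * (φ (n k) x) ^ 2 ∂μ) atTop (𝓝 (∫ x, g x ∂μ)) :=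
    hlim.comp hnat
  -- key bound
  have key : ∀ k, ∫ x, g x * (φ (n k) x) ^ 2 ∂μ ≤ δ * (1/2)^(k+1) := by
    intro k
    have e1 : ∫ x, g x * (φ (n k) x) ^ 2 ∂μ = ∫ x in Cᶜ, (φ (n k) x) ^ 2 ∂μ := by
      rw [← integral_indicator hCm.compl]
      congr 1
      ext x
      by_cases hx : x ∈ Cᶜ <;> simp [hg, hx]
    have e2 : ∫ x in Cᶜ, (φ (n k) x) ^ 2 ∂μ = ∫ x in Cᶜ, (ψ k x) ^ 2 ∂μ :=
      integral_congr_ae (ae_restrict_of_ae ((hψae k).mono fun x hx => by simp [hx]))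
    have e3 : ∫ x in Cᶜ, (ψ k x) ^ 2 ∂μ ≤ ∫ x in (B k)ᶜ, (ψ k x) ^ 2 ∂μ := by
      refine setIntegral_mono_set (hintψsq k).integrableOn
        (ae_of_all _ fun x => sq_nonneg _) ?_
      exact HasSubset.Subset.eventuallyLE (Set.compl_subset_compl.2 (Set.subset_iUnion B k))
    have e4 : ∫ x in (B k)ᶜ, (ψ k x) ^ 2 ∂μ ≤ ∫ x in (B k)ᶜ, |ψ k x| ∂μ := by
      refine setIntegral_mono_on (hintψsq k).integrableOn (hintψabs k).integrableOn
        (hBm k).compl fun x hx => ?_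
      have hx1 : |ψ k x| < 1 := by
        have : ¬ (1:ℝ) ≤ |ψ k x| := hx
        linarith [not_le.mp this]
      nlinarith [abs_nonneg (ψ k x), sq_abs (ψ k x)]
    have e5 : ∫ x in (B k)ᶜ, |ψ k x| ∂μ ≤ ∫ x, |ψ k x| ∂μ :=
      setIntegral_le_integral (hintψabs k) (ae_of_all _ fun x => abs_nonneg _)
    have e6 : ∫ x, |ψ k x| ∂μ = ∫ x, |φ (n k) x| ∂μ :=
      (integral_congr_ae ((hψae k).mono fun x hx => by simp [hx] : (fun x => |φ (n k) x|) =ᵐ[μ] fun x => |ψ k x|)).symm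
    linarith [hnlt k]
  have knn : ∀ k, 0 ≤ ∫ x, g x * (φ (n k) x) ^ 2 ∂μ := fun k =>
    integral_nonneg fun x => mul_nonneg (hgnn x) (sq_nonneg _)
  -- the bound sequence tends to 0
  have hbound0 : Tendsto (fun k : ℕ => δ * (1/2:ℝ)^(k+1)) atTop (𝓝 0) := by
    have h := tendsto_pow_atTop_nhds_zero_of_lt_one (by norm_num : (0:ℝ) ≤ 1/2)
      (by norm_num : (1/2:ℝ) < 1)
    have h2 : Tendsto (fun k : ℕ => (1/2:ℝ)^(k+1)) atTop (𝓝 0) :=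
      h.comp (tendsto_add_atTop_nat 1)
    simpa using h2.const_mul δ
  have hzero : Tendsto (fun k => ∫ x, g x * (φ (n k) x) ^ 2 ∂μ) atTop (𝓝 0) :=
    squeeze_zero knn key hbound0
  have : ∫ x, g x ∂μ = 0 := tendsto_nhds_unique hsub hzero
  rw [hintg] at this
  exact hCcpos.ne' this
end

section
/- Let X be a compact metric space and ν a finite Borel measure on X. Let (φ_j) be a sequence of Borel measurable, square ν-integrable real functions that is quantum ergodic on the base, i.e. ∫_X f φ_j² dν → ∫_X f dν for every continuous f : X → ℝ. Suppose that along some subsequence (j_k) the measures E ↦ ∫_E |φ_{j_k}| dν converge weak* (i.e. when integrated against every continuous function) to a finite Borel measure μ on X. Then μ is absolutely continuous with respect to ν. -/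
open MeasureTheory Filter Topology
open scoped ENNReal NNReal

/-- **Weak* limits of |φ_j| dν along a quantum ergodic sequence are absolutely
continuous.** Let X be a compact metric space, ν a finite Borel measure, and
(φ_j) a sequence of measurable square-integrable real functions which is quantum
ergodic on the base: ∫ f φ_j² dν → ∫ f dν for every continuous f. If along a
subsequence the measures E ↦ ∫_E |φ_{j_k}| dν converge weak* to a finite Borel
measure μ, then μ ≪ ν. -/
theorem absolutelyContinuous_of_weakStar_limit_quantum_ergodic
    {X : Type*} [MetricSpace X] [CompactSpace X] [MeasurableSpace X] [BorelSpace X]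
    (ν : Measure X) [IsFiniteMeasure ν]
    (φ : ℕ → X → ℝ)
    (hmeas : ∀ j, Measurable (φ j))
    (hL2 : ∀ j, MemLp (φ j) 2 ν)
    (hQE : ∀ f : C(X, ℝ), Tendsto (fun j => ∫ x, f x * (φ j x) ^ 2 ∂ν)
      atTop (𝓝 (∫ x, f x ∂ν)))
    (j : ℕ → ℕ) (hj : StrictMono j)
    (μ : Measure X) [IsFiniteMeasure μ]
    (hconv : ∀ f : C(X, ℝ), Tendsto (fun k => ∫ x, f x * |φ (j k) x| ∂ν)
      atTop (𝓝 (∫ x, f x ∂μ))) :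
    μ ≪ ν := by
  -- Step A: for every nonnegative continuous `f`, `∫ f ∂μ ≤ ∫ f ∂ν`.
  have key : ∀ f : C(X, ℝ), (∀ x, 0 ≤ f x) → ∫ x, f x ∂μ ≤ ∫ x, f x ∂ν := by
    intro f hf
    have hA0 : 0 ≤ ∫ x, f x ∂ν := integral_nonneg fun x => hf x
    have hGc : Continuous fun x => Real.sqrt (f x) :=
      Real.continuous_sqrt.comp f.continuous
    obtain ⟨C, hC⟩ : ∃ C : ℝ, ∀ x, Real.sqrt (f x) ≤ C := by
      obtain ⟨C, hC⟩ := (isCompact_range hGc).bddAbove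
      exact ⟨C, fun x => hC (Set.mem_range_self x)⟩
    have hg_mem : MemLp (fun x => Real.sqrt (f x)) (ENNReal.ofReal (2 : ℝ)) ν := by
      refine MemLp.of_bound hGc.aestronglyMeasurable C ?_
      refine Eventually.of_forall fun x => ?_
      rw [Real.norm_eq_abs, abs_of_nonneg (Real.sqrt_nonneg _)]
      exact hC x
    have hconj : Real.HolderConjugate 2 2 := Real.HolderConjugate.two_two
    -- Cauchy–Schwarz bound for each `k`.
    have bound : ∀ k, ∫ x, f x * |φ (j k) x| ∂ν ≤
        Real.sqrt (∫ x, f x ∂ν) * Real.sqrt (∫ x, f x * (φ (j k) x) ^ 2 ∂ν) := by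
      intro k
      have hφm : MemLp (fun x => Real.sqrt (f x) * |φ (j k) x|)
          (ENNReal.ofReal (2 : ℝ)) ν := by
        rw [show ENNReal.ofReal (2 : ℝ) = (2 : ℝ≥0∞) by norm_num]
        refine MemLp.of_le_mul (c := C) (hL2 (j k))
          ((hGc.measurable.mul (hmeas (j k)).abs).aestronglyMeasurable) ?_
        refine Eventually.of_forall fun x => ?_
        have h1 : ‖Real.sqrt (f x) * |φ (j k) x|‖ = Real.sqrt (f x) * ‖φ (j k) x‖ := by
          rw [Real.norm_eq_abs, Real.norm_eq_abs, abs_mul, abs_abs,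
            abs_of_nonneg (Real.sqrt_nonneg _)]
        rw [h1]
        exact mul_le_mul_of_nonneg_right (hC x) (norm_nonneg _)
      have H := integral_mul_le_Lp_mul_Lq_of_nonneg hconj
        (Eventually.of_forall fun x => Real.sqrt_nonneg (f x))
        (Eventually.of_forall fun x =>
          mul_nonneg (Real.sqrt_nonneg (f x)) (abs_nonneg (φ (j k) x)))
        hg_mem hφm
      beta_reduce at H
      have e1 : ∫ a, Real.sqrt (f a) * (Real.sqrt (f a) * |φ (j k) a|) ∂ν
          = ∫ x, f x * |φ (j k) x| ∂ν := by
        refine integral_congr_ae (Eventually.of_forall fun x => ?_)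
        dsimp only
        rw [← mul_assoc, Real.mul_self_sqrt (hf x)]
      have e2 : ∫ a, Real.sqrt (f a) ^ (2 : ℝ) ∂ν = ∫ x, f x ∂ν := by
        refine integral_congr_ae (Eventually.of_forall fun x => ?_)
        dsimp only
        rw [show (2 : ℝ) = ((2 : ℕ) : ℝ) by norm_num, Real.rpow_natCast, sq,
          Real.mul_self_sqrt (hf x)]
      have e3 : ∫ a, (Real.sqrt (f a) * |φ (j k) a|) ^ (2 : ℝ) ∂ν
          = ∫ x, f x * (φ (j k) x) ^ 2 ∂ν := by
        refine integral_congr_ae (Eventually.of_forall fun x => ?_)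
        dsimp only
        rw [show (2 : ℝ) = ((2 : ℕ) : ℝ) by norm_num, Real.rpow_natCast, mul_pow,
          sq_abs, sq, Real.mul_self_sqrt (hf x)]
      rw [e1, e2, e3] at H
      calc ∫ x, f x * |φ (j k) x| ∂ν
          ≤ (∫ x, f x ∂ν) ^ (1 / 2 : ℝ) *
            (∫ x, f x * (φ (j k) x) ^ 2 ∂ν) ^ (1 / 2 : ℝ) := H
        _ = Real.sqrt (∫ x, f x ∂ν) *
            Real.sqrt (∫ x, f x * (φ (j k) x) ^ 2 ∂ν) := by
            rw [Real.sqrt_eq_rpow, Real.sqrt_eq_rpow]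
    -- the right-hand side tends to `∫ f ∂ν`.
    have h2' : Tendsto (fun k => ∫ x, f x * (φ (j k) x) ^ 2 ∂ν) atTop
        (𝓝 (∫ x, f x ∂ν)) := (hQE f).comp hj.tendsto_atTop
    have h3 : Tendsto (fun k => Real.sqrt (∫ x, f x ∂ν) *
        Real.sqrt (∫ x, f x * (φ (j k) x) ^ 2 ∂ν)) atTop
        (𝓝 (Real.sqrt (∫ x, f x ∂ν) * Real.sqrt (∫ x, f x ∂ν))) :=
      tendsto_const_nhds.mul ((Real.continuous_sqrt.tendsto _).comp h2')
    rw [Real.mul_self_sqrt hA0] at h3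
    exact le_of_tendsto_of_tendsto' (hconv f) h3 bound
  -- Step B: `μ F ≤ ν F` for every closed set `F`.
  have hclosed : ∀ F : Set X, IsClosed F → μ F ≤ ν F := by
    intro F hF
    have lkey : ∀ n : ℕ, ∫⁻ x, (hF.apprSeq n x : ℝ≥0∞) ∂μ
        ≤ ∫⁻ x, (hF.apprSeq n x : ℝ≥0∞) ∂ν := by
      intro n
      set s := hF.apprSeq n with hs
      have hμfin := BoundedContinuousFunction.lintegral_lt_top_of_nnreal μ s
      have hνfin := BoundedContinuousFunction.lintegral_lt_top_of_nnreal ν s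
      rw [← ENNReal.toReal_le_toReal hμfin.ne hνfin.ne,
        BoundedContinuousFunction.toReal_lintegral_coe_eq_integral,
        BoundedContinuousFunction.toReal_lintegral_coe_eq_integral]
      exact key ⟨fun x => (s x : ℝ), NNReal.continuous_coe.comp s.continuous⟩
        fun x => (s x).2
    have t2 := HasOuterApproxClosed.tendsto_lintegral_apprSeq hF ν
    exact ge_of_tendsto' t2 fun n =>
      (HasOuterApproxClosed.measure_le_lintegral hF μ n).trans (lkey n)
  -- Step C: conclude absolute continuity via inner regularity by closed sets.
  refine Measure.AbsolutelyContinuous.mk fun E hE hνE => ?_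
  have hle : μ E ≤ ν E := by
    rw [hE.measure_eq_iSup_isClosed_of_ne_top (measure_ne_top μ E)]
    refine iSup_le fun K => iSup_le fun hK => iSup_le fun hKc => ?_
    exact (hclosed K hKc).trans (measure_mono hK)
  exact le_antisymm (hνE ▸ hle) (zero_le)
end
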